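/- Let C = C_{1/3} × C_{1/3} be the product of the middle-third Cantor set with itself. For every t ∈ C, the pinned distance set Δ_t(C) = {‖c - t‖₂ : c ∈ C} has non-empty interior. -/

import Mathlib

def cantorMT : Set ℝ :=
  {x | ∃ a : ℕ → ℕ, (∀ k, a k = 0 ∨ a k = 1) ∧
    x = (2 / 3) * ∑' k : ℕ, (a k : ℝ) / 3 ^ k}


open Filter

noncomputable section CantorPin
open scoped Classical

/-- term size for digit k -/
def mu3 (k : ℕ) : ℝ := 2/3 * (1/3:ℝ)^k

variable (N : ℕ) (ε φ : ℕ → ℝ) (x0 y0 r : ℝ)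

def aa3 (z0 : ℝ) (m : ℕ) : ℝ := 2/3 * (1/3:ℝ)^(N+m) * (2*|z0| - 3*(1/3:ℝ)^N)

def wp3 (s : ℕ → ℝ) (z0 : ℝ) (m : ℕ) : ℝ := if 0 < s (N+m) * z0 then aa3 N z0 m else 0

def wn3 (s : ℕ → ℝ) (z0 : ℝ) (m : ℕ) : ℝ := aa3 N z0 m - wp3 N s z0 m

def UU3 (m : ℕ) : ℝ := ∑' j, (wp3 N ε x0 (m+j) + wp3 N φ y0 (m+j))

def LL3 (m : ℕ) : ℝ := -∑' j, (wn3 N ε x0 (m+j) + wn3 N φ y0 (m+j))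

def xstep3 (m : ℕ) (p : ℝ × ℝ) : ℝ :=
  if LL3 N ε φ x0 y0 m + wn3 N ε x0 m ≤ r - (p.1^2 + p.2^2) ∧
      r - (p.1^2 + p.2^2) ≤ UU3 N ε φ x0 y0 m - wp3 N ε x0 m then p.1
  else p.1 + ε (N+m) * mu3 (N+m)

def ystep3 (m : ℕ) (p : ℝ × ℝ) : ℝ :=
  if LL3 N ε φ x0 y0 m + wn3 N ε x0 m + wn3 N φ y0 m ≤ r - ((xstep3 N ε φ x0 y0 r m p)^2 + p.2^2) ∧
      r - ((xstep3 N ε φ x0 y0 r m p)^2 + p.2^2) ≤ UU3 N ε φ x0 y0 m - wp3 N ε x0 m - wp3 N φ y0 m then p.2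
  else p.2 + φ (N+m) * mu3 (N+m)

def St3 : ℕ → ℝ × ℝ
  | 0 => (x0, y0)
  | (m+1) => (xstep3 N ε φ x0 y0 r m (St3 m), ystep3 N ε φ x0 y0 r m (St3 m))

end CantorPin

section Facts
open Filter
variable (N : ℕ) (ε φ : ℕ → ℝ) (x0 y0 r : ℝ)

lemma summable_geo_c (c : ℝ) : Summable (fun j : ℕ => c * (1/3:ℝ)^j) :=
  (summable_geometric_of_lt_one (by norm_num) (by norm_num)).mul_left c

lemma tsum_geo_c (c : ℝ) : ∑' j : ℕ, c * (1/3:ℝ)^j = c * (3/2) := by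
  rw [tsum_mul_left, tsum_geometric_of_lt_one (by norm_num) (by norm_num : (1/3:ℝ) < 1)]
  norm_num

lemma aa3_nonneg (z0 : ℝ) (h : 0 ≤ 2*|z0| - 3*(1/3:ℝ)^N) (m : ℕ) : 0 ≤ aa3 N z0 m := by
  unfold aa3; positivity

lemma wp3_nonneg (s : ℕ → ℝ) (z0 : ℝ) (h : 0 ≤ 2*|z0| - 3*(1/3:ℝ)^N) (m : ℕ) :
    0 ≤ wp3 N s z0 m := by
  unfold wp3; split
  · exact aa3_nonneg N z0 h m
  · exact le_refl 0

lemma wp3_le_aa3 (s : ℕ → ℝ) (z0 : ℝ) (h : 0 ≤ 2*|z0| - 3*(1/3:ℝ)^N) (m : ℕ) :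
    wp3 N s z0 m ≤ aa3 N z0 m := by
  unfold wp3; split
  · exact le_refl _
  · exact aa3_nonneg N z0 h m

lemma wn3_nonneg (s : ℕ → ℝ) (z0 : ℝ) (h : 0 ≤ 2*|z0| - 3*(1/3:ℝ)^N) (m : ℕ) :
    0 ≤ wn3 N s z0 m := by
  have := wp3_le_aa3 N s z0 h m; unfold wn3; linarith

lemma wn3_le_aa3 (s : ℕ → ℝ) (z0 : ℝ) (h : 0 ≤ 2*|z0| - 3*(1/3:ℝ)^N) (m : ℕ) :
    wn3 N s z0 m ≤ aa3 N z0 m := by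
  have := wp3_nonneg N s z0 h m; unfold wn3; linarith

lemma aa3_eq (z0 : ℝ) (m j : ℕ) :
    aa3 N z0 (m+j) = (2/3 * (1/3:ℝ)^(N+m) * (2*|z0| - 3*(1/3:ℝ)^N)) * (1/3:ℝ)^j := by
  unfold aa3
  rw [show N+(m+j) = (N+m)+j from by omega, pow_add]
  ring

lemma summable_aux (f : ℕ → ℝ) (C : ℝ) (h0 : ∀ j, 0 ≤ f j)
    (hle : ∀ j, f j ≤ C * (1/3:ℝ)^j) : Summable f :=
  Summable.of_nonneg_of_le h0 hle (summable_geo_c C)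

variable (hx : 0 ≤ 2*|x0| - 3*(1/3:ℝ)^N) (hy : 0 ≤ 2*|y0| - 3*(1/3:ℝ)^N)

include hx hy in
lemma summable_wp3 (m : ℕ) :
    Summable (fun j => wp3 N ε x0 (m+j) + wp3 N φ y0 (m+j)) := by
  apply summable_aux _ (2/3 * (1/3:ℝ)^(N+m) * (2*|x0| - 3*(1/3:ℝ)^N)
      + 2/3 * (1/3:ℝ)^(N+m) * (2*|y0| - 3*(1/3:ℝ)^N))
  · intro j; exact add_nonneg (wp3_nonneg N ε x0 hx _) (wp3_nonneg N φ y0 hy _)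
  · intro j
    have h1 := wp3_le_aa3 N ε x0 hx (m+j)
    have h2 := wp3_le_aa3 N φ y0 hy (m+j)
    rw [aa3_eq N x0 m j] at h1
    rw [aa3_eq N y0 m j] at h2
    nlinarith [pow_nonneg (by norm_num : (0:ℝ) ≤ 1/3) j]

include hx hy in
lemma summable_wn3 (m : ℕ) :
    Summable (fun j => wn3 N ε x0 (m+j) + wn3 N φ y0 (m+j)) := by
  apply summable_aux _ (2/3 * (1/3:ℝ)^(N+m) * (2*|x0| - 3*(1/3:ℝ)^N)
      + 2/3 * (1/3:ℝ)^(N+m) * (2*|y0| - 3*(1/3:ℝ)^N))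
  · intro j; exact add_nonneg (wn3_nonneg N ε x0 hx _) (wn3_nonneg N φ y0 hy _)
  · intro j
    have h1 := wn3_le_aa3 N ε x0 hx (m+j)
    have h2 := wn3_le_aa3 N φ y0 hy (m+j)
    rw [aa3_eq N x0 m j] at h1
    rw [aa3_eq N y0 m j] at h2
    nlinarith [pow_nonneg (by norm_num : (0:ℝ) ≤ 1/3) j]

include hx hy in
lemma UU3_nonneg (m : ℕ) : 0 ≤ UU3 N ε φ x0 y0 m := by
  apply tsum_nonneg
  intro j; exact add_nonneg (wp3_nonneg N ε x0 hx _) (wp3_nonneg N φ y0 hy _)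

include hx hy in
lemma LL3_nonpos (m : ℕ) : LL3 N ε φ x0 y0 m ≤ 0 := by
  unfold LL3
  rw [neg_nonpos]
  apply tsum_nonneg
  intro j; exact add_nonneg (wn3_nonneg N ε x0 hx _) (wn3_nonneg N φ y0 hy _)

include hx hy in
lemma UL3_sub (m : ℕ) : UU3 N ε φ x0 y0 m - LL3 N ε φ x0 y0 m
    = ((2*|x0| - 3*(1/3:ℝ)^N) + (2*|y0| - 3*(1/3:ℝ)^N)) * (1/3:ℝ)^(N+m) := by
  unfold UU3 LL3
  rw [sub_neg_eq_add, ← Summable.tsum_add (summable_wp3 N ε φ x0 y0 hx hy m) (summable_wn3 N ε φ x0 y0 hx hy m)]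
  have : ∀ j : ℕ, (wp3 N ε x0 (m+j) + wp3 N φ y0 (m+j)) + (wn3 N ε x0 (m+j) + wn3 N φ y0 (m+j))
      = ((2/3) * ((2*|x0| - 3*(1/3:ℝ)^N) + (2*|y0| - 3*(1/3:ℝ)^N)) * (1/3:ℝ)^(N+m)) * (1/3:ℝ)^j := by
    intro j
    unfold wn3
    have h1 := aa3_eq N x0 m j
    have h2 := aa3_eq N y0 m j
    ring_nf
    ring_nf at h1 h2
    linarith
  rw [tsum_congr this, tsum_geo_c]
  ring

lemma tail_rec (f : ℕ → ℝ) (m : ℕ) (hf : Summable (fun j => f (m+j))) :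
    ∑' j, f (m+j) = f m + ∑' j, f ((m+1)+j) := by
  rw [hf.tsum_eq_zero_add]
  have h2 : ∑' (b : ℕ), f (m + (b + 1)) = ∑' (j : ℕ), f ((m+1) + j) := by
    apply tsum_congr; intro j; congr 1; omega
  rw [h2, Nat.add_zero]

include hx hy in
lemma UU3_rec (m : ℕ) : UU3 N ε φ x0 y0 m
    = (wp3 N ε x0 m + wp3 N φ y0 m) + UU3 N ε φ x0 y0 (m+1) :=
  tail_rec (fun k => wp3 N ε x0 k + wp3 N φ y0 k) m (summable_wp3 N ε φ x0 y0 hx hy m)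

include hx hy in
lemma LL3_rec (m : ℕ) : LL3 N ε φ x0 y0 (m+1)
    = LL3 N ε φ x0 y0 m + (wn3 N ε x0 m + wn3 N φ y0 m) := by
  have := tail_rec (fun k => wn3 N ε x0 k + wn3 N φ y0 k) m (summable_wn3 N ε φ x0 y0 hx hy m)
  unfold LL3
  rw [this]
  ring

end Facts

section Substep

lemma substep (τ tm μ a β s z0 z e Lo Hi w w' z' : ℝ)
    (hs : s = 1 ∨ s = -1)
    (hz0 : 0 < 2*|z0| - 3*τ)
    (htm : 0 < tm) (htm2 : tm ≤ τ)
    (hμ : μ = 2/3 * tm)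
    (ha : a = 2/3 * tm * (2*|z0| - 3*τ))
    (hβ : β = 2/3 * tm * (2*|z0| + 3*τ))
    (hcond : β ≤ (Hi - Lo) - a)
    (hz : |z - z0| ≤ τ - tm)
    (heLo : Lo ≤ e) (heHi : e ≤ Hi)
    (hw : w = if 0 < s*z0 then a else 0) (hw' : w' = a - w)
    (hz' : z' = if Lo + w' ≤ e ∧ e ≤ Hi - w then z else z + s*μ) :
    |z' - z0| ≤ τ - tm/3 ∧ Lo + w' ≤ e - (z'^2 - z^2) ∧ e - (z'^2 - z^2) ≤ Hi - w := by
  have hτ : 0 < τ := lt_of_lt_of_le htm htm2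
  have hμ0 : 0 < μ := by rw [hμ]; linarith
  have habs0 : 0 < |z0| := by linarith
  have hsabs : |s| = 1 := by rcases hs with h | h <;> rw [h] <;> norm_num
  have hzz : |s*z - s*z0| ≤ τ - tm := by
    have : s*z - s*z0 = s*(z - z0) := by ring
    rw [this, abs_mul, hsabs, one_mul]; exact hz
  have hzz1 : s*z - s*z0 ≤ τ - tm := (abs_le.mp hzz).2
  have hzz2 : -(τ - tm) ≤ s*z - s*z0 := (abs_le.mp hzz).1
  have ha0 : 0 < a := by rw [ha]; positivity
  have hw01 : 0 ≤ w ∧ w ≤ a := by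
    rw [hw]; split
    · exact ⟨le_of_lt ha0, le_refl a⟩
    · exact ⟨le_refl 0, le_of_lt ha0⟩
  by_cases h : Lo + w' ≤ e ∧ e ≤ Hi - w
  · rw [hz', if_pos h]
    refine ⟨by linarith [hz], ?_, ?_⟩ <;> simp only [sub_self, sub_zero] <;>
      [exact h.1; exact h.2]
  · rw [hz', if_neg h]
    have hlam : (z + s*μ)^2 - z^2 = μ*(2*(s*z) + μ) := by
      rcases hs with h1 | h1 <;> subst h1 <;> ring
    rw [hlam]
    constructor
    · have : |z + s*μ - z0| ≤ |z - z0| + |s*μ| := by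
        have : z + s*μ - z0 = (z - z0) + s*μ := by ring
        rw [this]; exact abs_add_le _ _
      rw [abs_mul, hsabs, one_mul, abs_of_pos hμ0] at this
      have := hz
      rw [hμ] at *
      linarith
    rcases not_and_or.mp h with hlt | hgt
    · -- e < Lo + w'
      push_neg at hlt
      have hw'pos : 0 < w' := by linarith
      have hsz0 : ¬ (0 < s*z0) := by
        intro hpos
        rw [hw, if_pos hpos] at hw'
        rw [hw'] at hw'pos; linarith
      have hwz : w = 0 := by rw [hw, if_neg hsz0]
      push_neg at hsz0
      have hsz0' : s*z0 < 0 := by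
        rcases lt_or_eq_of_le hsz0 with h0 | h0
        · exact h0
        · exfalso
          have : |s*z0| = 0 := by rw [h0]; simp
          rw [abs_mul, hsabs, one_mul] at this
          linarith
      have hd0 : s*z0 = -|z0| := by
        have h1 : |s*z0| = |z0| := by rw [abs_mul, hsabs, one_mul]
        have := abs_of_neg hsz0'
        linarith
      have hw'a : w' = a := by rw [hw', hwz]; ring
      have hfac : 2*(s*z) + μ ≤ -(2*|z0| - 3*τ) := by
        rw [hμ]; linarith
      have hfac2 : -(2*|z0| + 3*τ) ≤ 2*(s*z) + μ := by
        rw [hμ]; linarith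
      have hub : μ*(2*(s*z) + μ) ≤ -a := by
        have h2 := mul_le_mul_of_nonneg_left hfac hμ0.le
        rw [mul_neg] at h2
        rw [ha, ← hμ]
        exact h2
      have hlb : -β ≤ μ*(2*(s*z) + μ) := by
        have h2 := mul_le_mul_of_nonneg_left hfac2 hμ0.le
        rw [mul_neg] at h2
        rw [hβ, ← hμ]
        exact h2
      constructor
      · rw [hw'a]; linarith
      · rw [hwz]; linarith [hlt]
    · -- Hi - w < e
      push_neg at hgt
      have hwpos : 0 < w := by
        rcases lt_or_eq_of_le hw01.1 with h0 | h0
        · exact h0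
        · exfalso; rw [← h0] at hgt; linarith
      have hsz0 : 0 < s*z0 := by
        by_contra hcon
        rw [hw, if_neg hcon] at hwpos; linarith
      have hd0 : s*z0 = |z0| := by
        have h1 : |s*z0| = |z0| := by rw [abs_mul, hsabs, one_mul]
        have := abs_of_pos hsz0
        linarith
      have hwa : w = a := by rw [hw, if_pos hsz0]
      have hw'0 : w' = 0 := by rw [hw', hwa]; ring
      have hfac : (2*|z0| - 3*τ) ≤ 2*(s*z) + μ := by
        rw [hμ]; linarith
      have hfac2 : 2*(s*z) + μ ≤ 2*|z0| + 3*τ := by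
        rw [hμ]; linarith
      have hlb : a ≤ μ*(2*(s*z) + μ) := by
        have h2 := mul_le_mul_of_nonneg_left hfac hμ0.le
        rw [ha, ← hμ]
        exact h2
      have hub : μ*(2*(s*z) + μ) ≤ β := by
        have h2 := mul_le_mul_of_nonneg_left hfac2 hμ0.le
        rw [hβ, ← hμ]
        exact h2
      constructor
      · rw [hw'0]; linarith [hgt]
      · rw [hwa]; linarith

end Substep


section Invariant
open Filter

variable (N : ℕ) (ε φ : ℕ → ℝ) (x0 y0 r : ℝ)
  (hε : ∀ k, ε k = 1 ∨ ε k = -1) (hφ : ∀ k, φ k = 1 ∨ φ k = -1)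
  (hQP : |y0| ≤ |x0|)
  (h0 : 0 < 2*|y0| - 3*(1/3:ℝ)^N)
  (h1 : 2*(2*|x0| + 3*(1/3:ℝ)^N) ≤ (2*|x0| - 3*(1/3:ℝ)^N) + 3*(2*|y0| - 3*(1/3:ℝ)^N))
  (h2 : 2*(2*|y0| + 3*(1/3:ℝ)^N) ≤ (2*|x0| - 3*(1/3:ℝ)^N) + (2*|y0| - 3*(1/3:ℝ)^N))
  (hrlo : LL3 N ε φ x0 y0 0 ≤ r - (x0^2 + y0^2))
  (hrhi : r - (x0^2 + y0^2) ≤ UU3 N ε φ x0 y0 0)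

include hε hφ hQP h0 h1 h2 hrlo hrhi in
lemma invariant3 : ∀ m : ℕ,
    |(St3 N ε φ x0 y0 r m).1 - x0| ≤ (1/3:ℝ)^N - (1/3:ℝ)^(N+m) ∧
    |(St3 N ε φ x0 y0 r m).2 - y0| ≤ (1/3:ℝ)^N - (1/3:ℝ)^(N+m) ∧
    LL3 N ε φ x0 y0 m ≤ r - ((St3 N ε φ x0 y0 r m).1^2 + (St3 N ε φ x0 y0 r m).2^2) ∧
    r - ((St3 N ε φ x0 y0 r m).1^2 + (St3 N ε φ x0 y0 r m).2^2) ≤ UU3 N ε φ x0 y0 m := by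
  have hx0' : 0 < 2*|x0| - 3*(1/3:ℝ)^N := by linarith
  have hx0'' : 0 ≤ 2*|x0| - 3*(1/3:ℝ)^N := le_of_lt hx0'
  have hy0'' : 0 ≤ 2*|y0| - 3*(1/3:ℝ)^N := le_of_lt h0
  intro m
  induction m with
  | zero =>
    simp only [St3]
    rw [Nat.add_zero]
    refine ⟨by simp, by simp, hrlo, hrhi⟩
  | succ m ih =>
    obtain ⟨ihx, ihy, ihlo, ihhi⟩ := ih
    set p := St3 N ε φ x0 y0 r m with hp
    have hτpos : (0:ℝ) < (1/3:ℝ)^N := by positivity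
    have htm : (0:ℝ) < (1/3:ℝ)^(N+m) := by positivity
    have htm2 : (1/3:ℝ)^(N+m) ≤ (1/3:ℝ)^N :=
      pow_le_pow_of_le_one (by norm_num) (by norm_num) (Nat.le_add_right N m)
    have hUL := UL3_sub N ε φ x0 y0 hx0'' hy0'' m
    -- x substep
    have hcondx : 2/3 * (1/3:ℝ)^(N+m) * (2*|x0| + 3*(1/3:ℝ)^N)
        ≤ (UU3 N ε φ x0 y0 m - LL3 N ε φ x0 y0 m) - aa3 N x0 m := by
      rw [hUL]
      unfold aa3
      nlinarith [mul_le_mul_of_nonneg_right h1 (le_of_lt htm)]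
    have keyx := substep ((1/3:ℝ)^N) ((1/3:ℝ)^(N+m)) (mu3 (N+m)) (aa3 N x0 m)
      (2/3 * (1/3:ℝ)^(N+m) * (2*|x0| + 3*(1/3:ℝ)^N)) (ε (N+m)) x0 p.1
      (r - (p.1^2 + p.2^2)) (LL3 N ε φ x0 y0 m) (UU3 N ε φ x0 y0 m)
      (wp3 N ε x0 m) (wn3 N ε x0 m) (xstep3 N ε φ x0 y0 r m p)
      (hε (N+m)) hx0' htm htm2 rfl rfl rfl hcondx ihx ihlo ihhi rfl rfl rfl
    obtain ⟨hxmove, hxlo, hxhi⟩ := keyx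
    set x' := xstep3 N ε φ x0 y0 r m p with hx'
    have he' : r - (p.1^2 + p.2^2) - (x'^2 - p.1^2) = r - (x'^2 + p.2^2) := by ring
    rw [he'] at hxlo hxhi
    -- y substep
    have hwnx : wp3 N ε x0 m + wn3 N ε x0 m = aa3 N x0 m := by unfold wn3; ring
    have hcondy : 2/3 * (1/3:ℝ)^(N+m) * (2*|y0| + 3*(1/3:ℝ)^N)
        ≤ ((UU3 N ε φ x0 y0 m - wp3 N ε x0 m) - (LL3 N ε φ x0 y0 m + wn3 N ε x0 m))
          - aa3 N y0 m := by
      have h2' := mul_le_mul_of_nonneg_right h2 (le_of_lt htm)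
      unfold aa3 at hwnx ⊢
      nlinarith [h2', hwnx, hUL]
    have keyy := substep ((1/3:ℝ)^N) ((1/3:ℝ)^(N+m)) (mu3 (N+m)) (aa3 N y0 m)
      (2/3 * (1/3:ℝ)^(N+m) * (2*|y0| + 3*(1/3:ℝ)^N)) (φ (N+m)) y0 p.2
      (r - (x'^2 + p.2^2)) (LL3 N ε φ x0 y0 m + wn3 N ε x0 m)
      (UU3 N ε φ x0 y0 m - wp3 N ε x0 m)
      (wp3 N φ y0 m) (wn3 N φ y0 m) (ystep3 N ε φ x0 y0 r m p)
      (hφ (N+m)) h0 htm htm2 rfl rfl rfl hcondy ihy hxlo hxhi rfl rfl rfl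
    obtain ⟨hymove, hylo, hyhi⟩ := keyy
    set y' := ystep3 N ε φ x0 y0 r m p with hy'
    have he'' : r - (x'^2 + p.2^2) - (y'^2 - p.2^2) = r - (x'^2 + y'^2) := by ring
    rw [he''] at hylo hyhi
    have hpow : (1/3:ℝ)^(N+(m+1)) = (1/3:ℝ)^(N+m) * (1/3) := by
      rw [show N+(m+1) = (N+m)+1 from rfl, pow_succ]
    have hS : St3 N ε φ x0 y0 r (m+1) = (x', y') := by
      simp only [St3, hx', hy', hp]
    rw [hS]
    have hrecU := UU3_rec N ε φ x0 y0 hx0'' hy0'' m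
    have hrecL := LL3_rec N ε φ x0 y0 hx0'' hy0'' m
    refine ⟨by rw [hpow]; linarith, by rw [hpow]; linarith, ?_, ?_⟩
    · show LL3 N ε φ x0 y0 (m+1) ≤ r - (x'^2 + y'^2)
      rw [hrecL]; linarith [hylo]
    · show r - (x'^2 + y'^2) ≤ UU3 N ε φ x0 y0 (m+1)
      linarith [hyhi, hrecU]

include hε hφ hQP h0 h1 h2 in
lemma core3 :
    ∃ L U : ℝ, 0 < U - L ∧ ∀ r ∈ Set.Icc L U, ∃ u v : ℕ → ℕ,
      (∀ m, u m = 0 ∨ u m = 1) ∧ (∀ m, v m = 0 ∨ v m = 1) ∧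
      r = (x0 + ∑' m : ℕ, (u m : ℝ) * ε (N+m) * mu3 (N+m))^2
        + (y0 + ∑' m : ℕ, (v m : ℝ) * φ (N+m) * mu3 (N+m))^2 := by
  have hx0' : 0 < 2*|x0| - 3*(1/3:ℝ)^N := by linarith
  have hx0'' : 0 ≤ 2*|x0| - 3*(1/3:ℝ)^N := le_of_lt hx0'
  have hy0'' : 0 ≤ 2*|y0| - 3*(1/3:ℝ)^N := le_of_lt h0
  refine ⟨x0^2 + y0^2 + LL3 N ε φ x0 y0 0, x0^2 + y0^2 + UU3 N ε φ x0 y0 0, ?_, ?_⟩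
  · have := UL3_sub N ε φ x0 y0 hx0'' hy0'' 0
    have hpos : (0:ℝ) < ((2*|x0| - 3*(1/3:ℝ)^N) + (2*|y0| - 3*(1/3:ℝ)^N)) * (1/3:ℝ)^(N+0) := by
      have : (0:ℝ) < (1/3:ℝ)^(N+0) := by positivity
      nlinarith
    linarith
  intro r hr
  have hrlo : LL3 N ε φ x0 y0 0 ≤ r - (x0^2 + y0^2) := by
    have := hr.1; linarith
  have hrhi : r - (x0^2 + y0^2) ≤ UU3 N ε φ x0 y0 0 := by
    have := hr.2; linarith
  have inv := invariant3 N ε φ x0 y0 r hε hφ hQP h0 h1 h2 hrlo hrhi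
  classical
  set u : ℕ → ℕ := fun m =>
    if (St3 N ε φ x0 y0 r (m+1)).1 = (St3 N ε φ x0 y0 r m).1 then 0 else 1 with hu
  set v : ℕ → ℕ := fun m =>
    if (St3 N ε φ x0 y0 r (m+1)).2 = (St3 N ε φ x0 y0 r m).2 then 0 else 1 with hv
  have hmupos : ∀ k : ℕ, 0 < mu3 k := by intro k; unfold mu3; positivity
  have hdx : ∀ m, (St3 N ε φ x0 y0 r (m+1)).1
      = (St3 N ε φ x0 y0 r m).1 + (u m : ℝ) * ε (N+m) * mu3 (N+m) := by
    intro m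
    have hfst : (St3 N ε φ x0 y0 r (m+1)).1 = xstep3 N ε φ x0 y0 r m (St3 N ε φ x0 y0 r m) := by
      simp only [St3]
    by_cases hc : LL3 N ε φ x0 y0 m + wn3 N ε x0 m ≤ r - ((St3 N ε φ x0 y0 r m).1^2 + (St3 N ε φ x0 y0 r m).2^2) ∧
        r - ((St3 N ε φ x0 y0 r m).1^2 + (St3 N ε φ x0 y0 r m).2^2) ≤ UU3 N ε φ x0 y0 m - wp3 N ε x0 m
    · have hx1 : (St3 N ε φ x0 y0 r (m+1)).1 = (St3 N ε φ x0 y0 r m).1 := by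
        rw [hfst]; unfold xstep3; rw [if_pos hc]
      rw [hu]
      simp only [hx1, if_pos rfl]
      norm_num
    · have hx1 : (St3 N ε φ x0 y0 r (m+1)).1
          = (St3 N ε φ x0 y0 r m).1 + ε (N+m) * mu3 (N+m) := by
        rw [hfst]; unfold xstep3; rw [if_neg hc]
      have hne : (St3 N ε φ x0 y0 r (m+1)).1 ≠ (St3 N ε φ x0 y0 r m).1 := by
        rw [hx1]
        intro hcon
        have h2' : ε (N+m) * mu3 (N+m) = 0 := by linarith
        rcases hε (N+m) with he | he <;> rw [he] at h2' <;>
          [linarith [hmupos (N+m)]; nlinarith [hmupos (N+m)]]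
      rw [hu]
      simp only [if_neg hne]
      rw [hx1]
      norm_num
  have hdy : ∀ m, (St3 N ε φ x0 y0 r (m+1)).2
      = (St3 N ε φ x0 y0 r m).2 + (v m : ℝ) * φ (N+m) * mu3 (N+m) := by
    intro m
    have hfst : (St3 N ε φ x0 y0 r (m+1)).2 = ystep3 N ε φ x0 y0 r m (St3 N ε φ x0 y0 r m) := by
      simp only [St3]
    by_cases hc : LL3 N ε φ x0 y0 m + wn3 N ε x0 m + wn3 N φ y0 m ≤
        r - ((xstep3 N ε φ x0 y0 r m (St3 N ε φ x0 y0 r m))^2 + (St3 N ε φ x0 y0 r m).2^2) ∧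
        r - ((xstep3 N ε φ x0 y0 r m (St3 N ε φ x0 y0 r m))^2 + (St3 N ε φ x0 y0 r m).2^2) ≤
        UU3 N ε φ x0 y0 m - wp3 N ε x0 m - wp3 N φ y0 m
    · have hx1 : (St3 N ε φ x0 y0 r (m+1)).2 = (St3 N ε φ x0 y0 r m).2 := by
        rw [hfst]; unfold ystep3; rw [if_pos hc]
      rw [hv]
      simp only [hx1, if_pos rfl]
      norm_num
    · have hx1 : (St3 N ε φ x0 y0 r (m+1)).2
          = (St3 N ε φ x0 y0 r m).2 + φ (N+m) * mu3 (N+m) := by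
        rw [hfst]; unfold ystep3; rw [if_neg hc]
      have hne : (St3 N ε φ x0 y0 r (m+1)).2 ≠ (St3 N ε φ x0 y0 r m).2 := by
        rw [hx1]
        intro hcon
        have h2' : φ (N+m) * mu3 (N+m) = 0 := by linarith
        rcases hφ (N+m) with he | he <;> rw [he] at h2' <;>
          [linarith [hmupos (N+m)]; nlinarith [hmupos (N+m)]]
      rw [hv]
      simp only [if_neg hne]
      rw [hx1]
      norm_num
  have hu01 : ∀ m, u m = 0 ∨ u m = 1 := by
    intro m
    by_cases hc : (St3 N ε φ x0 y0 r (m+1)).1 = (St3 N ε φ x0 y0 r m).1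
    · left; simp [hu, hc]
    · right; simp [hu, hc]
  have hv01 : ∀ m, v m = 0 ∨ v m = 1 := by
    intro m
    by_cases hc : (St3 N ε φ x0 y0 r (m+1)).2 = (St3 N ε φ x0 y0 r m).2
    · left; simp [hv, hc]
    · right; simp [hv, hc]
  -- summability
  have habs_term : ∀ (w : ℕ → ℕ) (s : ℕ → ℝ), (∀ m, w m = 0 ∨ w m = 1) →
      (∀ k, s k = 1 ∨ s k = -1) →
      Summable (fun m : ℕ => (w m : ℝ) * s (N+m) * mu3 (N+m)) := by
    intro w s hw hs
    apply Summable.of_abs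
    apply summable_aux _ (2/3 * (1/3:ℝ)^N)
    · intro j; exact abs_nonneg _
    · intro j
      have h1 : |(w j : ℝ)| ≤ 1 := by rcases hw j with h | h <;> rw [h] <;> norm_num
      have h2 : |s (N+j)| = 1 := by rcases hs (N+j) with h | h <;> rw [h] <;> norm_num
      have h3 : |mu3 (N+j)| = mu3 (N+j) := abs_of_pos (hmupos (N+j))
      rw [abs_mul, abs_mul, h2, h3, mul_one]
      have : mu3 (N+j) = (2/3 * (1/3:ℝ)^N) * (1/3:ℝ)^j := by
        unfold mu3; rw [pow_add]; ring
      rw [this]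
      have hpos : (0:ℝ) < 2/3 * (1/3:ℝ)^N * (1/3:ℝ)^j := by positivity
      nlinarith [h1, hpos, abs_nonneg ((w j : ℝ))]
  have hsumu := habs_term u ε hu01 hε
  have hsumv := habs_term v φ hv01 hφ
  set X := ∑' m : ℕ, (u m : ℝ) * ε (N+m) * mu3 (N+m) with hX
  set Y := ∑' m : ℕ, (v m : ℝ) * φ (N+m) * mu3 (N+m) with hY
  refine ⟨u, v, hu01, hv01, ?_⟩
  -- partial sums
  have hpartx : ∀ m, (St3 N ε φ x0 y0 r m).1
      = x0 + ∑ i ∈ Finset.range m, (u i : ℝ) * ε (N+i) * mu3 (N+i) := by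
    intro m
    induction m with
    | zero => simp [St3]
    | succ m ih => rw [hdx m, ih, Finset.sum_range_succ]; ring
  have hparty : ∀ m, (St3 N ε φ x0 y0 r m).2
      = y0 + ∑ i ∈ Finset.range m, (v i : ℝ) * φ (N+i) * mu3 (N+i) := by
    intro m
    induction m with
    | zero => simp [St3]
    | succ m ih => rw [hdy m, ih, Finset.sum_range_succ]; ring
  have hxlim : Tendsto (fun m => (St3 N ε φ x0 y0 r m).1) atTop (nhds (x0 + X)) := by
    have := (tendsto_const_nhds (x := x0) (f := atTop (α := ℕ))).add
      hsumu.hasSum.tendsto_sum_nat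
    apply this.congr
    intro m; rw [hpartx m]
  have hylim : Tendsto (fun m => (St3 N ε φ x0 y0 r m).2) atTop (nhds (y0 + Y)) := by
    have := (tendsto_const_nhds (x := y0) (f := atTop (α := ℕ))).add
      hsumv.hasSum.tendsto_sum_nat
    apply this.congr
    intro m; rw [hparty m]
  have helim : Tendsto (fun m => r - ((St3 N ε φ x0 y0 r m).1^2 + (St3 N ε φ x0 y0 r m).2^2))
      atTop (nhds (r - ((x0+X)^2 + (y0+Y)^2))) :=
    tendsto_const_nhds.sub ((hxlim.pow 2).add (hylim.pow 2))
  have hgbound : Tendsto (fun m : ℕ =>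
      (((2*|x0| - 3*(1/3:ℝ)^N) + (2*|y0| - 3*(1/3:ℝ)^N)) * (1/3:ℝ)^N) * (1/3:ℝ)^m)
      atTop (nhds 0) := by
    rw [show (0:ℝ) = (((2*|x0| - 3*(1/3:ℝ)^N) + (2*|y0| - 3*(1/3:ℝ)^N)) * (1/3:ℝ)^N) * 0 from by ring]
    exact (tendsto_pow_atTop_nhds_zero_of_lt_one (by norm_num) (by norm_num)).const_mul _
  have hgneg : Tendsto (fun m : ℕ =>
      -((((2*|x0| - 3*(1/3:ℝ)^N) + (2*|y0| - 3*(1/3:ℝ)^N)) * (1/3:ℝ)^N) * (1/3:ℝ)^m))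
      atTop (nhds 0) := by
    rw [show (0:ℝ) = -0 from by ring]
    exact hgbound.neg
  have hUL' : ∀ m, UU3 N ε φ x0 y0 m - LL3 N ε φ x0 y0 m
      = (((2*|x0| - 3*(1/3:ℝ)^N) + (2*|y0| - 3*(1/3:ℝ)^N)) * (1/3:ℝ)^N) * (1/3:ℝ)^m := by
    intro m
    rw [UL3_sub N ε φ x0 y0 hx0'' hy0'' m, pow_add]
    ring
  have hzero : Tendsto (fun m => r - ((St3 N ε φ x0 y0 r m).1^2 + (St3 N ε φ x0 y0 r m).2^2))
      atTop (nhds 0) := by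
    apply tendsto_of_tendsto_of_tendsto_of_le_of_le hgneg hgbound
    · intro m
      have h3 := (inv m).2.2.1
      have h4 := LL3_nonpos N ε φ x0 y0 hx0'' hy0'' m
      have h5 := UU3_nonneg N ε φ x0 y0 hx0'' hy0'' m
      have h6 := hUL' m
      linarith
    · intro m
      have h3 := (inv m).2.2.2
      have h4 := LL3_nonpos N ε φ x0 y0 hx0'' hy0'' m
      have h6 := hUL' m
      linarith
  have := tendsto_nhds_unique helim hzero
  linarith

section Assembly

lemma summable_digit_div (a : ℕ → ℕ) (ha : ∀ k, a k = 0 ∨ a k = 1) :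
    Summable (fun k => (a k:ℝ)/3^k) := by
  apply summable_aux _ 1
  · intro j; positivity
  · intro j
    rcases ha j with h | h <;> rw [h]
    · simp
    · rw [one_mul, div_pow, one_pow]
      norm_num

lemma summable_sign_term (w : ℕ → ℕ) (s : ℕ → ℝ) (hw : ∀ k, w k = 0 ∨ w k = 1)
    (hs : ∀ k, s k = 1 ∨ s k = -1) :
    Summable (fun k : ℕ => (w k : ℝ) * s k * mu3 k) := by
  apply Summable.of_abs
  apply summable_aux _ (2/3)
  · intro j; exact abs_nonneg _
  · intro j
    have h1 : |(w j : ℝ)| ≤ 1 := by rcases hw j with h | h <;> rw [h] <;> norm_num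
    have h2 : |s j| = 1 := by rcases hs j with h | h <;> rw [h] <;> norm_num
    have hmu : (0:ℝ) < mu3 j := by unfold mu3; positivity
    have h3 : |mu3 j| = mu3 j := abs_of_pos hmu
    rw [abs_mul, abs_mul, h2, h3, mul_one]
    have : mu3 j = (2/3) * (1/3:ℝ)^j := rfl
    rw [this]
    nlinarith [h1, abs_nonneg ((w j : ℝ)), pow_pos (show (0:ℝ) < 1/3 by norm_num) j]

lemma flip_mem (a w : ℕ → ℕ) (ha : ∀ k, a k = 0 ∨ a k = 1) (hw : ∀ k, w k = 0 ∨ w k = 1) :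
    (2/3) * (∑' k : ℕ, (a k:ℝ)/3^k) + ∑' k : ℕ, (w k:ℝ) * (1 - 2*(a k:ℝ)) * mu3 k
      ∈ cantorMT := by
  have hsa := summable_digit_div a ha
  have hg' : Summable (fun k : ℕ => (w k:ℝ) * (1 - 2*(a k:ℝ)) * (1/3:ℝ)^k) := by
    apply Summable.of_abs
    apply summable_aux _ 1
    · intro j; exact abs_nonneg _
    · intro j
      have h1 : |(w j : ℝ)| ≤ 1 := by rcases hw j with h | h <;> rw [h] <;> norm_num
      have h2 : |1 - 2*(a j:ℝ)| = 1 := by rcases ha j with h | h <;> rw [h] <;> norm_num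
      have h3 : |(1/3:ℝ)^j| = (1/3:ℝ)^j := abs_of_pos (by positivity)
      rw [abs_mul, abs_mul, h2, h3, mul_one]
      nlinarith [h1, abs_nonneg ((w j : ℝ)), pow_pos (show (0:ℝ) < 1/3 by norm_num) j]
  refine ⟨fun k => if w k = 1 then 1 - a k else a k, ?_, ?_⟩
  · intro k
    rcases ha k with h | h <;> rcases hw k with h' | h' <;> simp [h, h']
  · have hterm : ∀ k : ℕ, ((if w k = 1 then 1 - a k else a k : ℕ):ℝ)/3^k
        = (a k:ℝ)/3^k + (w k:ℝ) * (1 - 2*(a k:ℝ)) * (1/3:ℝ)^k := by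
      intro k
      have hp : (1/3:ℝ)^k = 1/3^k := by rw [div_pow, one_pow]
      rcases ha k with h | h <;> rcases hw k with h' | h' <;>
        simp [h, h', hp] <;> ring
    have hsa' : Summable (fun k => (a k:ℝ)/3^k + (w k:ℝ) * (1 - 2*(a k:ℝ)) * (1/3:ℝ)^k) :=
      hsa.add hg'
    rw [tsum_congr hterm, hsa.tsum_add hg']
    have hmu : ∀ k : ℕ, (w k:ℝ) * (1 - 2*(a k:ℝ)) * mu3 k
        = (2/3) * ((w k:ℝ) * (1 - 2*(a k:ℝ)) * (1/3:ℝ)^k) := by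
      intro k; unfold mu3; ring
    rw [tsum_congr hmu, tsum_mul_left]
    ring

end Assembly

section Split

def uf2 (u : ℕ → ℕ) (k : ℕ) : ℕ :=
  if k = 0 then 1 else if k = 1 then 1 else if k < 5 then 0 else u (k-5)

def uf1 (u : ℕ → ℕ) (k : ℕ) : ℕ :=
  if k = 0 then 1 else if k < 5 then 0 else u (k-5)

lemma uf2_01 (u : ℕ → ℕ) (hu : ∀ k, u k = 0 ∨ u k = 1) : ∀ k, uf2 u k = 0 ∨ uf2 u k = 1 := by
  intro k
  unfold uf2
  split
  · right; rfl
  split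
  · right; rfl
  split
  · left; rfl
  · exact hu (k-5)

lemma uf1_01 (u : ℕ → ℕ) (hu : ∀ k, u k = 0 ∨ u k = 1) : ∀ k, uf1 u k = 0 ∨ uf1 u k = 1 := by
  intro k
  unfold uf1
  split
  · right; rfl
  split
  · left; rfl
  · exact hu (k-5)

lemma split2 (s : ℕ → ℝ) (hs : ∀ k, s k = 1 ∨ s k = -1) (u : ℕ → ℕ)
    (hu : ∀ k, u k = 0 ∨ u k = 1) :
    ∑' k : ℕ, (uf2 u k : ℝ) * s k * mu3 k
      = s 0 * (2/3) + s 1 * (2/9) + ∑' m : ℕ, (u m : ℝ) * s (5+m) * mu3 (5+m) := by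
  have hsf := summable_sign_term (uf2 u) s (uf2_01 u hu) hs
  rw [← hsf.sum_add_tsum_nat_add 5]
  congr 1
  · simp [Finset.sum_range_succ, uf2, mu3]
    try norm_num
  · apply tsum_congr
    intro m
    rw [show 5 + m = m + 5 from by omega]
    unfold uf2
    rw [if_neg (by omega : ¬(m+5 = 0)), if_neg (by omega : ¬(m+5 = 1)),
      if_neg (by omega : ¬(m+5 < 5)), Nat.add_sub_cancel]

lemma split1 (s : ℕ → ℝ) (hs : ∀ k, s k = 1 ∨ s k = -1) (u : ℕ → ℕ)
    (hu : ∀ k, u k = 0 ∨ u k = 1) :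
    ∑' k : ℕ, (uf1 u k : ℝ) * s k * mu3 k
      = s 0 * (2/3) + ∑' m : ℕ, (u m : ℝ) * s (5+m) * mu3 (5+m) := by
  have hsf := summable_sign_term (uf1 u) s (uf1_01 u hu) hs
  rw [← hsf.sum_add_tsum_nat_add 5]
  congr 1
  · simp [Finset.sum_range_succ, uf1, mu3]
    try norm_num
  · apply tsum_congr
    intro m
    rw [show 5 + m = m + 5 from by omega]
    unfold uf1
    rw [if_neg (by omega : ¬(m+5 = 0)), if_neg (by omega : ¬(m+5 < 5)), Nat.add_sub_cancel]

lemma abs_val (z c : ℝ) (hc : 0 ≤ c) (h : z = c ∨ z = -c) : |z| = c := by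
  rcases h with h | h <;> rw [h]
  · exact abs_of_nonneg hc
  · rw [abs_neg]; exact abs_of_nonneg hc

end Split

theorem stmt_15 (t : EuclideanSpace ℝ (Fin 2))
    (ht : t 0 ∈ cantorMT ∧ t 1 ∈ cantorMT) :
    (interior {d : ℝ | ∃ c : EuclideanSpace ℝ (Fin 2),
      (c 0 ∈ cantorMT ∧ c 1 ∈ cantorMT) ∧ dist c t = d}).Nonempty := by
  obtain ⟨⟨a, ha, hta⟩, ⟨b, hb, htb⟩⟩ := ht
  set ε : ℕ → ℝ := fun k => 1 - 2*(a k:ℝ) with hεdef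
  set φ : ℕ → ℝ := fun k => 1 - 2*(b k:ℝ) with hφdef
  have hε : ∀ k, ε k = 1 ∨ ε k = -1 := by
    intro k; rcases ha k with h | h <;> rw [hεdef] <;> simp [h] <;> norm_num
  have hφ : ∀ k, φ k = 1 ∨ φ k = -1 := by
    intro k; rcases hb k with h | h <;> rw [hφdef] <;> simp [h] <;> norm_num
  set x0 : ℝ := ε 0 * (2/3) + ε 1 * (2/9) with hx0def
  set y0 : ℝ := φ 0 * (2/3) with hy0def
  have hy0abs : |y0| = 2/3 := by
    apply abs_val _ _ (by norm_num)
    rcases hφ 0 with h | h <;> [left; right] <;> rw [hy0def, h] <;> norm_num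
  have KEY : ∃ L U : ℝ, 0 < U - L ∧ ∀ r ∈ Set.Icc L U, ∃ u v : ℕ → ℕ,
      (∀ m, u m = 0 ∨ u m = 1) ∧ (∀ m, v m = 0 ∨ v m = 1) ∧
      r = (x0 + ∑' m : ℕ, (u m : ℝ) * ε (5+m) * mu3 (5+m))^2
        + (y0 + ∑' m : ℕ, (v m : ℝ) * φ (5+m) * mu3 (5+m))^2 := by
    by_cases hee : ε 0 = ε 1
    · have hx0abs : |x0| = 8/9 := by
        apply abs_val _ _ (by norm_num)
        rcases hε 0 with h | h <;> [left; right] <;> rw [hx0def, ← hee, h] <;> norm_num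
      exact core3 5 ε φ x0 y0 hε hφ
        (by rw [hx0abs, hy0abs]; norm_num)
        (by rw [hy0abs]; norm_num)
        (by rw [hx0abs, hy0abs]; norm_num)
        (by rw [hx0abs, hy0abs]; norm_num)
    · have hee' : ε 1 = -(ε 0) := by
        rcases hε 0 with h | h <;> rcases hε 1 with h' | h' <;>
          first
            | (exfalso; exact hee (h.trans h'.symm))
            | (rw [h, h']; try norm_num)
      have hx0abs : |x0| = 4/9 := by
        apply abs_val _ _ (by norm_num)
        rcases hε 0 with h | h <;> [left; right] <;> rw [hx0def, hee', h] <;> norm_num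
      obtain ⟨L, U, hLU, hall⟩ := core3 5 φ ε y0 x0 hφ hε
        (by rw [hx0abs, hy0abs]; norm_num)
        (by rw [hx0abs]; norm_num)
        (by rw [hx0abs, hy0abs]; norm_num)
        (by rw [hx0abs, hy0abs]; norm_num)
      refine ⟨L, U, hLU, ?_⟩
      intro r hr
      obtain ⟨u, v, hu01, hv01, hrr⟩ := hall r hr
      exact ⟨v, u, hv01, hu01, by rw [hrr]; ring⟩
  obtain ⟨L, U, hLU, hKEY⟩ := KEY
  have hL0 : 0 ≤ L := by
    obtain ⟨u, v, _, _, hrr⟩ := hKEY L (Set.mem_Icc.mpr ⟨le_refl L, by linarith⟩)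
    rw [hrr]; positivity
  have hU0 : 0 ≤ U := by linarith
  have hLltU : L < U := by linarith
  have hsub : Set.Ioo (Real.sqrt L) (Real.sqrt U) ⊆ {d : ℝ | ∃ c : EuclideanSpace ℝ (Fin 2),
      (c 0 ∈ cantorMT ∧ c 1 ∈ cantorMT) ∧ dist c t = d} := by
    intro d hd
    have hd0 : 0 ≤ d := le_trans (Real.sqrt_nonneg L) (le_of_lt hd.1)
    have hdL : L ≤ d^2 := by
      have h1 : Real.sqrt L ^ 2 ≤ d^2 := pow_le_pow_left₀ (Real.sqrt_nonneg L) (le_of_lt hd.1) 2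
      rwa [Real.sq_sqrt hL0] at h1
    have hdU : d^2 ≤ U := by
      have h1 : d^2 ≤ Real.sqrt U ^ 2 := pow_le_pow_left₀ hd0 (le_of_lt hd.2) 2
      rwa [Real.sq_sqrt hU0] at h1
    obtain ⟨u, v, hu01, hv01, hrr⟩ := hKEY (d^2) (Set.mem_Icc.mpr ⟨hdL, hdU⟩)
    set X := ∑' m : ℕ, (u m : ℝ) * ε (5+m) * mu3 (5+m) with hXdef
    set Y := ∑' m : ℕ, (v m : ℝ) * φ (5+m) * mu3 (5+m) with hYdef
    set c : EuclideanSpace ℝ (Fin 2) :=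
      WithLp.toLp 2 (fun i : Fin 2 => if i = 0 then t 0 + (x0 + X) else t 1 + (y0 + Y)) with hcdef
    have hc0 : c 0 = t 0 + (x0 + X) := rfl
    have hc1 : c 1 = t 1 + (y0 + Y) := by
      rw [hcdef]; simp
    refine ⟨c, ⟨?_, ?_⟩, ?_⟩
    · rw [hc0]
      have hXfull : x0 + X = ∑' k : ℕ, (uf2 u k : ℝ) * ε k * mu3 k := by
        rw [split2 ε hε u hu01, hXdef, hx0def]
      rw [hXfull, hta]
      have := flip_mem a (uf2 u) ha (uf2_01 u hu01)
      simpa [hεdef] using this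
    · rw [hc1]
      have hYfull : y0 + Y = ∑' k : ℕ, (uf1 v k : ℝ) * φ k * mu3 k := by
        rw [split1 φ hφ v hv01, hYdef, hy0def]
      rw [hYfull, htb]
      have := flip_mem b (uf1 v) hb (uf1_01 v hv01)
      simpa [hφdef] using this
    · rw [EuclideanSpace.dist_eq, Fin.sum_univ_two]
      have e0 : dist (c 0) (t 0) ^ 2 = (x0 + X)^2 := by
        rw [Real.dist_eq, sq_abs, hc0]; ring
      have e1 : dist (c 1) (t 1) ^ 2 = (y0 + Y)^2 := by
        rw [Real.dist_eq, sq_abs, hc1]; ring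
      rw [e0, e1, ← hrr, Real.sqrt_sq hd0]
  have hslt : Real.sqrt L < Real.sqrt U := Real.sqrt_lt_sqrt hL0 hLltU
  refine ⟨(Real.sqrt L + Real.sqrt U)/2, ?_⟩
  have h2 := interior_mono hsub
  rw [interior_Ioo] at h2
  exact h2 ⟨by linarith, by linarith⟩
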